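/- arXiv:2007.09497 — 4 statements merged into one kernel-verified Lean document; each statement's English description precedes it below -/
import Mathlib

section
/- For every real $\gamma > 0$ there is a constant $C_\gamma$ such that for all $y \ge 4$, $\left| \int_2^{\sqrt{y}} \frac{du}{(u \log u)(\log(y/u))^\gamma} - \frac{\log\log y}{(\log y)^\gamma} \right| \le \frac{C_\gamma}{(\log y)^\gamma}$. -/
open Real MeasureTheory

-- Bernoulli-type bound: x^γ ≤ 1 + γ 2^γ (x-1) on [1,2]
lemma aux_rpow_le (γ x : ℝ) (hγ : 0 ≤ γ) (h1 : 1 ≤ x) (h2 : x ≤ 2) :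
    x ^ γ ≤ 1 + γ * 2 ^ γ * (x - 1) := by
  have hx0 : (0:ℝ) < x := by linarith
  have hlog0 : 0 ≤ Real.log x := Real.log_nonneg h1
  have hlogle : Real.log x ≤ x - 1 := by
    have := Real.log_le_sub_one_of_pos hx0; linarith
  set s := γ * Real.log x with hs
  have hs0 : 0 ≤ s := mul_nonneg hγ hlog0
  have hxγ : x ^ γ = Real.exp s := by
    rw [Real.rpow_def_of_pos hx0, mul_comm]
  have hle2 : x ^ γ ≤ 2 ^ γ := Real.rpow_le_rpow (le_of_lt hx0) h2 hγ
  have hkey : Real.exp s ≤ 1 + s * Real.exp s := by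
    have h := Real.add_one_le_exp (-s)
    have hpos : (0:ℝ) < Real.exp s := Real.exp_pos s
    have : (-s + 1) * Real.exp s ≤ Real.exp (-s) * Real.exp s :=
      mul_le_mul_of_nonneg_right h (le_of_lt hpos)
    rw [← Real.exp_add, neg_add_cancel, Real.exp_zero] at this
    nlinarith
  have h2γ0 : (0:ℝ) ≤ 2 ^ γ := Real.rpow_nonneg (by norm_num) γ
  nlinarith [mul_le_mul_of_nonneg_left hlogle hγ]

-- FTC: ∫_2^x du/(u log u) = log log x - log log 2
lemma aux_ftc (x : ℝ) (hx : 2 ≤ x) :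
    ∫ u in (2:ℝ)..x, 1 / (u * Real.log u)
      = Real.log (Real.log x) - Real.log (Real.log 2) := by
  have h2 : ∀ u : ℝ, 2 ≤ u → 0 < Real.log u := fun u hu =>
    Real.log_pos (by linarith)
  apply intervalIntegral.integral_eq_sub_of_hasDerivAt
  · intro u hu
    rw [Set.uIcc_of_le hx] at hu
    have hu2 : 2 ≤ u := hu.1
    have hu0 : (0:ℝ) < u := by linarith
    have hlu : 0 < Real.log u := h2 u hu2
    have hd := (Real.hasDerivAt_log (ne_of_gt hlu)).comp u (Real.hasDerivAt_log (ne_of_gt hu0))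
    have he : 1 / (u * Real.log u) = (Real.log u)⁻¹ * u⁻¹ := by rw [one_div, mul_inv]; ring
    rw [he]; exact hd
  · apply ContinuousOn.intervalIntegrable
    rw [Set.uIcc_of_le hx]
    apply ContinuousOn.div continuousOn_const
    · exact continuousOn_id.mul (Real.continuousOn_log.mono (fun u hu => by
        simp only [Set.mem_compl_iff, Set.mem_singleton_iff]
        intro h; rw [h] at hu; exact absurd hu.1 (by norm_num)))
    · intro u hu
      exact mul_ne_zero (by intro h; rw [h] at hu; exact absurd hu.1 (by norm_num))
        (ne_of_gt (h2 u hu.1))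

-- key: 1/a^γ ≤ 1/b^γ + γ2^γ·2(b-a)/(b·b^γ) for b/2 ≤ a ≤ b
lemma aux_key (γ a b : ℝ) (hγ : 0 ≤ γ) (ha : 0 < a) (hab : a ≤ b) (h2a : b ≤ 2*a) :
    1/a^γ ≤ 1/b^γ + γ*2^γ * (2*(b-a)) / (b*b^γ) := by
  have hb : 0 < b := lt_of_lt_of_le ha hab
  have hM0 : 0 ≤ γ*2^γ := mul_nonneg hγ (Real.rpow_nonneg (by norm_num) γ)
  have hA : 0 < a^γ := Real.rpow_pos_of_pos ha γ
  have hB : 0 < b^γ := Real.rpow_pos_of_pos hb γ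
  have hx1 : 1 ≤ b/a := (one_le_div ha).mpr hab
  have hx2 : b/a ≤ 2 := (div_le_iff₀ ha).mpr (by linarith)
  have h1 := aux_rpow_le γ (b/a) hγ hx1 hx2
  rw [Real.div_rpow hb.le ha.le] at h1
  have hx3 : b/a - 1 ≤ 2*(b-a)/b := by
    rw [div_sub_one (ne_of_gt ha), div_le_div_iff₀ ha hb]
    nlinarith
  have e1 : 1/a^γ = (b^γ/a^γ)/b^γ := by field_simp
  rw [e1, div_le_iff₀ hB]
  calc b^γ/a^γ ≤ 1 + γ*2^γ*(b/a-1) := h1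
    _ ≤ 1 + γ*2^γ*(2*(b-a)/b) := by nlinarith
    _ = (1/b^γ + γ*2^γ*(2*(b-a))/(b*b^γ)) * b^γ := by field_simp

/-- for `γ > 0` there is `C_γ` with
`|∫_2^√y du/((u log u)(log(y/u))^γ) - loglog y/(log y)^γ| ≤ C_γ/(log y)^γ` for `y ≥ 4`. -/
theorem stmt_3 (γ : ℝ) (hγ : 0 < γ) :
    ∃ C : ℝ, ∀ y : ℝ, 4 ≤ y →
      |(∫ u in (2 : ℝ)..Real.sqrt y, 1 / ((u * Real.log u) * (Real.log (y / u)) ^ γ)) -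
        Real.log (Real.log y) / (Real.log y) ^ γ| ≤ C / (Real.log y) ^ γ := by
  set M : ℝ := γ * 2 ^ γ with hM
  have hM0 : 0 ≤ M := mul_nonneg hγ.le (Real.rpow_nonneg (by norm_num) γ)
  refine ⟨M + 1, fun y hy => ?_⟩
  have hy0 : (0:ℝ) < y := by linarith
  set s := Real.sqrt y with hsdef
  set b := Real.log y with hbdef
  have hs4 : Real.sqrt 4 = 2 := by
    rw [show (4:ℝ) = 2^2 by norm_num, Real.sqrt_sq (by norm_num)]
  have hs2 : (2:ℝ) ≤ s := by rw [← hs4]; exact Real.sqrt_le_sqrt hy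
  have hlog2 : (0:ℝ) < Real.log 2 := Real.log_pos (by norm_num)
  have hb1 : (1:ℝ) < b := by
    have h4 : Real.log 4 ≤ b := Real.log_le_log (by norm_num) hy
    have : Real.log 4 = 2 * Real.log 2 := by
      rw [show (4:ℝ) = 2^2 by norm_num, Real.log_pow]; push_cast; ring
    have := Real.log_two_gt_d9
    linarith
  have hb0 : (0:ℝ) < b := by linarith
  have hB : (0:ℝ) < b ^ γ := Real.rpow_pos_of_pos hb0 γ
  have hlogs : Real.log s = b / 2 := Real.log_sqrt hy0.le
  -- facts about u in [2,s]
  have key : ∀ u ∈ Set.Icc (2:ℝ) s, 0 < u ∧ 0 < Real.log u ∧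
      Real.log (y/u) = b - Real.log u ∧ b/2 ≤ Real.log (y/u) ∧ Real.log (y/u) ≤ b := by
    intro u hu
    have hu0 : (0:ℝ) < u := by linarith [hu.1]
    have hlu : 0 < Real.log u := Real.log_pos (by linarith [hu.1])
    have hld : Real.log (y/u) = b - Real.log u := Real.log_div (ne_of_gt hy0) (ne_of_gt hu0)
    have hls : Real.log u ≤ b/2 := by
      rw [← hlogs]; exact Real.log_le_log hu0 hu.2
    exact ⟨hu0, hlu, hld, by rw [hld]; linarith, by rw [hld]; linarith⟩
  set f : ℝ → ℝ := fun u => 1 / ((u * Real.log u) * (Real.log (y / u)) ^ γ) with hf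
  set G : ℝ → ℝ := fun u => (b ^ γ)⁻¹ * (1 / (u * Real.log u)) with hG
  set h : ℝ → ℝ := fun u => (2*M/(b*b^γ)) * (1/u) with hh
  have hsplit : ∀ (c A : ℝ), 1/(c*A) = (1/A)*(1/c) := fun c A => by
    rw [one_div, mul_inv, one_div, one_div]; ring
  -- continuity / integrability
  have hcul : ContinuousOn (fun u : ℝ => 1/(u * Real.log u)) (Set.Icc 2 s) := by
    apply ContinuousOn.div continuousOn_const
    · exact continuousOn_id.mul (Real.continuousOn_log.mono (fun u hu => by
        simp only [Set.mem_compl_iff, Set.mem_singleton_iff]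
        intro hc; rw [hc] at hu; exact absurd hu.1 (by norm_num)))
    · intro u hu
      exact mul_ne_zero (ne_of_gt (key u hu).1) (ne_of_gt (key u hu).2.1)
  have hint_cul : IntervalIntegrable (fun u : ℝ => 1/(u * Real.log u)) volume 2 s := by
    apply ContinuousOn.intervalIntegrable; rwa [Set.uIcc_of_le hs2]
  have hint_G : IntervalIntegrable G volume 2 s := hint_cul.const_mul _
  have hint_f : IntervalIntegrable f volume 2 s := by
    apply ContinuousOn.intervalIntegrable
    rw [Set.uIcc_of_le hs2]
    apply ContinuousOn.div continuousOn_const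
    · apply ContinuousOn.mul
      · exact continuousOn_id.mul (Real.continuousOn_log.mono (fun u hu => by
          simp only [Set.mem_compl_iff, Set.mem_singleton_iff]
          intro hc; rw [hc] at hu; exact absurd hu.1 (by norm_num)))
      · apply ContinuousOn.rpow_const
        · apply ContinuousOn.log
          · exact continuousOn_const.div continuousOn_id (fun u hu => ne_of_gt (key u hu).1)
          · intro u hu
            exact ne_of_gt (div_pos hy0 (key u hu).1)
        · intro u hu
          exact Or.inr hγ.le
    · intro u hu
      obtain ⟨hu0, hlu, _, hge, _⟩ := key u hu
      exact mul_ne_zero (mul_ne_zero (ne_of_gt hu0) (ne_of_gt hlu))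
        (ne_of_gt (Real.rpow_pos_of_pos (by linarith) γ))
  have hint_h : IntervalIntegrable h volume 2 s := by
    apply IntervalIntegrable.const_mul
    apply ContinuousOn.intervalIntegrable
    rw [Set.uIcc_of_le hs2]
    exact continuousOn_const.div continuousOn_id (fun u hu => by
      intro hc; rw [hc] at hu; exact absurd hu.1 (by norm_num))
  -- value of ∫ G
  have hGval : ∫ u in (2:ℝ)..s, G u
      = (b^γ)⁻¹ * (Real.log b - Real.log 2 - Real.log (Real.log 2)) := by
    rw [hG, intervalIntegral.integral_const_mul, aux_ftc s hs2, hlogs,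
      Real.log_div (ne_of_gt hb0) (by norm_num)]
  -- G ≤ f pointwise
  have hGf : ∫ u in (2:ℝ)..s, G u ≤ ∫ u in (2:ℝ)..s, f u := by
    apply intervalIntegral.integral_mono_on hs2 hint_G hint_f
    intro u hu
    obtain ⟨hu0, hlu, _, hge, hle⟩ := key u hu
    have ha0 : 0 < Real.log (y/u) := by linarith
    have hc0 : 0 < u * Real.log u := mul_pos hu0 hlu
    have hAB : (Real.log (y/u))^γ ≤ b^γ := Real.rpow_le_rpow ha0.le hle hγ.le
    have hA0 : 0 < (Real.log (y/u))^γ := Real.rpow_pos_of_pos ha0 γ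
    show (b ^ γ)⁻¹ * (1 / (u * Real.log u)) ≤ 1 / ((u * Real.log u) * (Real.log (y / u)) ^ γ)
    rw [hsplit (u * Real.log u) ((Real.log (y / u)) ^ γ), ← one_div (b ^ γ)]
    exact mul_le_mul_of_nonneg_right (one_div_le_one_div_of_le hA0 hAB)
      (by positivity)
  -- f ≤ G + h pointwise and integral bound
  have hfGh : ∫ u in (2:ℝ)..s, f u ≤ (∫ u in (2:ℝ)..s, G u) + M / b^γ := by
    have step1 : ∫ u in (2:ℝ)..s, f u ≤ ∫ u in (2:ℝ)..s, (G u + h u) := by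
      apply intervalIntegral.integral_mono_on hs2 hint_f (hint_G.add hint_h)
      intro u hu
      obtain ⟨hu0, hlu, hld, hge, hle⟩ := key u hu
      have ha0 : 0 < Real.log (y/u) := by linarith
      have hk := aux_key γ (Real.log (y/u)) b hγ.le ha0 hle (by linarith)
      have hba : b - Real.log (y/u) = Real.log u := by rw [hld]; ring
      rw [hba] at hk
      have hmul := mul_le_mul_of_nonneg_right hk
        (le_of_lt (one_div_pos.mpr (mul_pos hu0 hlu)))
      show 1 / ((u * Real.log u) * (Real.log (y / u)) ^ γ)
          ≤ (b ^ γ)⁻¹ * (1 / (u * Real.log u)) + (2*M/(b*b^γ)) * (1/u)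
      rw [hsplit (u * Real.log u) ((Real.log (y / u)) ^ γ)]
      calc (1/(Real.log (y/u))^γ) * (1/(u * Real.log u))
          ≤ (1/b^γ + γ*2^γ*(2*Real.log u)/(b*b^γ)) * (1/(u*Real.log u)) := hmul
        _ = (b ^ γ)⁻¹ * (1 / (u * Real.log u)) + (2*M/(b*b^γ)) * (1/u) := by
            have h1 : u ≠ 0 := ne_of_gt hu0
            have h2 : Real.log u ≠ 0 := ne_of_gt hlu
            have h3 : b ≠ 0 := ne_of_gt hb0
            have h4 : b ^ γ ≠ 0 := ne_of_gt hB
            rw [hM]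
            field_simp
    have step2 : ∫ u in (2:ℝ)..s, (G u + h u)
        = (∫ u in (2:ℝ)..s, G u) + ∫ u in (2:ℝ)..s, h u :=
      intervalIntegral.integral_add hint_G hint_h
    have step3 : ∫ u in (2:ℝ)..s, h u ≤ M / b^γ := by
      have h0 : (0:ℝ) ∉ Set.uIcc (2:ℝ) s := by
        rw [Set.uIcc_of_le hs2]; intro hc; linarith [hc.1]
      rw [hh, intervalIntegral.integral_const_mul, integral_one_div h0,
        Real.log_div (by linarith : s ≠ 0) (by norm_num), hlogs]
      have hfac : 0 ≤ 2*M/(b*b^γ) := by positivity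
      calc 2*M/(b*b^γ) * (b/2 - Real.log 2) ≤ 2*M/(b*b^γ) * (b/2) := by
            apply mul_le_mul_of_nonneg_left (by linarith) hfac
        _ = M / b^γ := by field_simp
    linarith
  -- finish
  set e : ℝ := Real.log 2 + Real.log (Real.log 2) with he
  have he0 : 0 < e := by
    have h1 : Real.log (1/2) < Real.log (Real.log 2) := by
      apply Real.log_lt_log (by norm_num)
      have := Real.log_two_gt_d9; linarith
    rw [Real.log_div (by norm_num) (by norm_num), Real.log_one] at h1
    rw [he]; linarith
  have he1 : e < 1 := by
    have h1 : Real.log (Real.log 2) < 0 := Real.log_neg hlog2 (by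
      have := Real.log_two_lt_d9; linarith)
    have := Real.log_two_lt_d9
    rw [he]; linarith
  have hGval' : ∫ u in (2:ℝ)..s, G u = Real.log b / b^γ - e / b^γ := by
    rw [hGval, he]; field_simp; ring
  have hdivle : e / b^γ ≤ 1 / b^γ := by
    apply (div_le_div_iff_of_pos_right hB).mpr
    linarith
  have he0b : 0 ≤ e / b^γ := le_of_lt (div_pos he0 hB)
  have hMB : (M+1)/b^γ = M/b^γ + 1/b^γ := add_div M 1 (b^γ)
  rw [abs_le]
  constructor <;> linarith [hGf, hfGh, hGval', hdivle, he0b]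
end

section
/- For every real $\gamma > 0$ with $\gamma \notin \mathbb{N}$ there is a constant $C_\gamma$ such that for all $y \ge 9$, $\int_{\sqrt{y}}^{y/3} \frac{du}{(u \log u)(\log(y/u))^\gamma} \le \frac{C_\gamma}{(\log y)^{\min\{\gamma, 1\}}}$. -/
open Real MeasureTheory


lemma key (γ : ℝ) (hγ : 0 < γ) (hγ1 : γ ≠ 1) (y : ℝ) (hy : 9 ≤ y) :
    (∫ u in Real.sqrt y..(y / 3), 1 / ((u * Real.log u) * (Real.log (y / u)) ^ γ)) ≤
      2 / Real.log y / (γ - 1) *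
        ((Real.log 3) ^ (1 - γ) - (Real.log y / 2) ^ (1 - γ)) := by
  have hy0 : (0:ℝ) < y := by linarith
  have h3a : (3:ℝ) ≤ Real.sqrt y := by
    have : Real.sqrt 9 ≤ Real.sqrt y := Real.sqrt_le_sqrt hy
    rwa [show (9:ℝ) = 3^2 by norm_num, Real.sqrt_sq (by norm_num)] at this
  have hab : Real.sqrt y ≤ y / 3 := by
    have h := Real.sqrt_le_sqrt (show y ≤ (y/3)^2 by nlinarith)
    rwa [Real.sqrt_sq (by linarith)] at h
  have hL : 2 < Real.log y := by
    have h9 : Real.exp 2 < 9 := by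
      have h := Real.exp_one_lt_d9
      calc Real.exp 2 = Real.exp 1 * Real.exp 1 := by
            rw [← Real.exp_add]; norm_num
        _ < 9 := by nlinarith [Real.exp_pos 1]
    calc (2:ℝ) = Real.log (Real.exp 2) := (Real.log_exp 2).symm
      _ < Real.log 9 := Real.log_lt_log (Real.exp_pos 2) h9
      _ ≤ Real.log y := Real.log_le_log (by norm_num) hy
  have hlog3 : 1 < Real.log 3 := by
    have h := Real.exp_one_lt_d9
    have h' : Real.exp 1 < 3 := by linarith
    calc (1:ℝ) = Real.log (Real.exp 1) := (Real.log_exp 1).symm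
      _ < Real.log 3 := Real.log_lt_log (Real.exp_pos 1) h'
  have hlogsqrt : Real.log (Real.sqrt y) = Real.log y / 2 := Real.log_sqrt hy0.le
  -- pointwise facts on Icc
  have hfacts : ∀ u ∈ Set.Icc (Real.sqrt y) (y/3),
      0 < u ∧ Real.log y / 2 ≤ Real.log u ∧ Real.log 3 ≤ Real.log (y / u) := by
    intro u hu
    obtain ⟨h1, h2⟩ := hu
    have hu0 : 0 < u := by linarith
    refine ⟨hu0, ?_, ?_⟩
    · rw [← hlogsqrt]
      exact Real.log_le_log (by linarith) h1
    · apply Real.log_le_log (by norm_num)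
      rw [le_div_iff₀ hu0]; linarith
  set f : ℝ → ℝ := fun u => 2 / Real.log y * (1 / (u * (Real.log (y/u)) ^ γ)) with hf
  set g : ℝ → ℝ := fun u => 2 / Real.log y / (γ - 1) * (Real.log (y/u)) ^ (1 - γ) with hg
  -- continuity / integrability of f on [a,b]
  have hcontf : ContinuousOn f (Set.Icc (Real.sqrt y) (y/3)) := by
    apply ContinuousOn.mul continuousOn_const
    apply ContinuousOn.div continuousOn_const
    · apply ContinuousOn.mul continuousOn_id
      apply ContinuousOn.rpow_const
      · apply ContinuousOn.log
        · exact (continuousOn_const.div continuousOn_id (fun u hu => (hfacts u hu).1.ne'))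
        · intro u hu
          have := (hfacts u hu).1
          positivity
      · intro u hu
        left
        have := (hfacts u hu).2.2
        intro hc; rw [hc] at this; linarith
    · intro u hu
      obtain ⟨hu0, -, hlu⟩ := hfacts u hu
      have : 0 < (Real.log (y/u)) ^ γ := Real.rpow_pos_of_pos (by linarith) γ
      positivity
  have hintf : IntervalIntegrable f volume (Real.sqrt y) (y/3) :=
    (hcontf.mono (by rw [Set.uIcc_of_le hab])).intervalIntegrable
  -- continuity of original integrand
  have hcont0 : ContinuousOn (fun u => 1 / ((u * Real.log u) * (Real.log (y / u)) ^ γ))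
      (Set.Icc (Real.sqrt y) (y/3)) := by
    apply ContinuousOn.div continuousOn_const
    · apply ContinuousOn.mul
      · exact continuousOn_id.mul (Real.continuousOn_log.mono (fun u hu => (hfacts u hu).1.ne'))
      · apply ContinuousOn.rpow_const
        · apply ContinuousOn.log
          · exact (continuousOn_const.div continuousOn_id (fun u hu => (hfacts u hu).1.ne'))
          · intro u hu; have := (hfacts u hu).1; positivity
        · intro u hu; left
          have := (hfacts u hu).2.2
          intro hc; rw [hc] at this; linarith
    · intro u hu
      obtain ⟨hu0, hlu, hlyu⟩ := hfacts u hu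
      have h1 : 0 < Real.log u := by linarith
      have h2 : 0 < (Real.log (y/u)) ^ γ := Real.rpow_pos_of_pos (by linarith) γ
      positivity
  have hint0 : IntervalIntegrable (fun u => 1 / ((u * Real.log u) * (Real.log (y / u)) ^ γ))
      volume (Real.sqrt y) (y/3) :=
    (hcont0.mono (by rw [Set.uIcc_of_le hab])).intervalIntegrable
  -- pointwise bound
  have hpt : ∀ u ∈ Set.Icc (Real.sqrt y) (y/3),
      1 / ((u * Real.log u) * (Real.log (y / u)) ^ γ) ≤ f u := by
    intro u hu
    obtain ⟨hu0, hlu, hlyu⟩ := hfacts u hu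
    have hP : 0 < (Real.log (y/u)) ^ γ := Real.rpow_pos_of_pos (by linarith) γ
    have hlu0 : 0 < Real.log u := by linarith
    simp only [hf]
    have hLy : 0 < Real.log y := by linarith
    have heq : 2 / Real.log y * (1 / (u * (Real.log (y/u)) ^ γ))
        = 2 / (Real.log y * (u * (Real.log (y/u)) ^ γ)) := by
      field_simp
    rw [heq, div_le_div_iff₀ (by positivity) (by positivity)]
    nlinarith [mul_le_mul_of_nonneg_right (show Real.log y ≤ 2 * Real.log u by linarith)
      (show (0:ℝ) ≤ u * (Real.log (y/u)) ^ γ by positivity)]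
  -- derivative
  have hderiv : ∀ u ∈ Set.uIcc (Real.sqrt y) (y/3), HasDerivAt g (f u) u := by
    rw [Set.uIcc_of_le hab]
    intro u hu
    obtain ⟨hu0, hlu, hlyu⟩ := hfacts u hu
    have hyu0 : 0 < y / u := by positivity
    have hlyu0 : 0 < Real.log (y/u) := by linarith
    have hd1 : HasDerivAt (fun u : ℝ => y / u) (-y / u^2) u := by
      have := (hasDerivAt_const u y).div (hasDerivAt_id u) hu0.ne'
      simp at this; exact this
    have hd2 : HasDerivAt (fun u : ℝ => Real.log (y / u)) (-(1/u)) u := by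
      have := (Real.hasDerivAt_log hyu0.ne').comp u hd1
      refine this.congr_deriv (Eq.symm ?_)
      field_simp
    have hd3 := hd2.rpow_const (p := 1 - γ) (Or.inl hlyu0.ne')
    have hd4 := hd3.const_mul (2 / Real.log y / (γ - 1))
    refine hd4.congr_deriv (Eq.symm ?_)
    simp only [hf]
    rw [show (1:ℝ) - γ - 1 = -γ by ring, Real.rpow_neg hlyu0.le]
    have hγ1' : γ - 1 ≠ 0 := sub_ne_zero.mpr hγ1
    field_simp
    ring
  calc (∫ u in Real.sqrt y..(y / 3), 1 / ((u * Real.log u) * (Real.log (y / u)) ^ γ))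
      ≤ ∫ u in Real.sqrt y..(y / 3), f u :=
        intervalIntegral.integral_mono_on hab hint0 hintf hpt
    _ = g (y/3) - g (Real.sqrt y) :=
        intervalIntegral.integral_eq_sub_of_hasDerivAt hderiv hintf
    _ = 2 / Real.log y / (γ - 1) *
        ((Real.log 3) ^ (1 - γ) - (Real.log y / 2) ^ (1 - γ)) := by
        simp only [hg]
        have e1 : y / (y/3) = 3 := by field_simp
        have e2 : y / Real.sqrt y = Real.sqrt y := Real.div_sqrt
        rw [e1, e2, hlogsqrt]
        ring

/-- for `γ > 0`, `γ ∉ ℕ`, there is `C_γ` with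
`∫_√y^{y/3} du/((u log u)(log(y/u))^γ) ≤ C_γ/(log y)^{min(γ,1)}` for `y ≥ 9`. -/
theorem stmt_4 (γ : ℝ) (hγ : 0 < γ) (hγn : ∀ n : ℕ, γ ≠ n) :
    ∃ C : ℝ, ∀ y : ℝ, 9 ≤ y →
      (∫ u in Real.sqrt y..(y / 3), 1 / ((u * Real.log u) * (Real.log (y / u)) ^ γ)) ≤
        C / (Real.log y) ^ (min γ 1) := by
  have hγ1 : γ ≠ 1 := by simpa using hγn 1
  have hlog3 : 1 < Real.log 3 := by
    have h := Real.exp_one_lt_d9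
    have h' : Real.exp 1 < 3 := by linarith
    calc (1:ℝ) = Real.log (Real.exp 1) := (Real.log_exp 1).symm
      _ < Real.log 3 := Real.log_lt_log (Real.exp_pos 1) h'
  rcases lt_or_gt_of_ne hγ1 with hlt | hgt
  · -- γ < 1, min = γ, C = 2^γ/(1-γ)
    refine ⟨(2:ℝ) ^ γ / (1 - γ), fun y hy => ?_⟩
    have hL : 2 < Real.log y := by
      have h9 : Real.exp 2 < 9 := by
        have h := Real.exp_one_lt_d9
        calc Real.exp 2 = Real.exp 1 * Real.exp 1 := by rw [← Real.exp_add]; norm_num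
          _ < 9 := by nlinarith [Real.exp_pos 1]
      calc (2:ℝ) = Real.log (Real.exp 2) := (Real.log_exp 2).symm
        _ < Real.log 9 := Real.log_lt_log (Real.exp_pos 2) h9
        _ ≤ Real.log y := Real.log_le_log (by norm_num) hy
    have hL0 : 0 < Real.log y := by linarith
    refine (key γ hγ hγ1 y hy).trans ?_
    rw [min_eq_left hlt.le]
    have h1 : 2 / Real.log y / (γ - 1) * ((Real.log 3) ^ (1 - γ) - (Real.log y / 2) ^ (1 - γ))
        = 2 / Real.log y / (1 - γ) * ((Real.log y / 2) ^ (1 - γ) - (Real.log 3) ^ (1 - γ)) := by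
      have ha : γ - 1 ≠ 0 := sub_ne_zero.mpr hγ1
      have hb : (1:ℝ) - γ ≠ 0 := sub_ne_zero.mpr (ne_of_gt (by linarith))
      field_simp
      ring
    rw [h1]
    have h2 : 2 / Real.log y / (1 - γ) * ((Real.log y / 2) ^ (1 - γ) - (Real.log 3) ^ (1 - γ))
        ≤ 2 / Real.log y / (1 - γ) * (Real.log y / 2) ^ (1 - γ) := by
      have h1γ : (0:ℝ) < 1 - γ := by linarith
      apply mul_le_mul_of_nonneg_left _ (by positivity)
      have : (0:ℝ) ≤ (Real.log 3) ^ (1 - γ) := Real.rpow_nonneg (by linarith) _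
      linarith
    refine h2.trans (le_of_eq ?_)
    rw [Real.div_rpow hL0.le (by norm_num), Real.rpow_sub hL0, Real.rpow_sub (by norm_num : (0:ℝ) < 2),
      Real.rpow_one, Real.rpow_one]
    have hLγ : (0:ℝ) < Real.log y ^ γ := Real.rpow_pos_of_pos hL0 γ
    have h2γ : (0:ℝ) < (2:ℝ) ^ γ := Real.rpow_pos_of_pos (by norm_num) γ
    have : (1:ℝ) - γ ≠ 0 := sub_ne_zero.mpr (ne_of_gt (by linarith))
    field_simp
  · -- γ > 1, min = 1, C = 2*(log 3)^(1-γ)/(γ-1)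
    refine ⟨2 * (Real.log 3) ^ (1 - γ) / (γ - 1), fun y hy => ?_⟩
    have hL : 2 < Real.log y := by
      have h9 : Real.exp 2 < 9 := by
        have h := Real.exp_one_lt_d9
        calc Real.exp 2 = Real.exp 1 * Real.exp 1 := by rw [← Real.exp_add]; norm_num
          _ < 9 := by nlinarith [Real.exp_pos 1]
      calc (2:ℝ) = Real.log (Real.exp 2) := (Real.log_exp 2).symm
        _ < Real.log 9 := Real.log_lt_log (Real.exp_pos 2) h9
        _ ≤ Real.log y := Real.log_le_log (by norm_num) hy
    have hL0 : 0 < Real.log y := by linarith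
    refine (key γ hγ hγ1 y hy).trans ?_
    rw [min_eq_right hgt.le, Real.rpow_one]
    have h2 : 2 / Real.log y / (γ - 1) * ((Real.log 3) ^ (1 - γ) - (Real.log y / 2) ^ (1 - γ))
        ≤ 2 / Real.log y / (γ - 1) * (Real.log 3) ^ (1 - γ) := by
      have h1γ : (0:ℝ) < γ - 1 := by linarith
      apply mul_le_mul_of_nonneg_left _ (by positivity)
      have : (0:ℝ) ≤ (Real.log y / 2) ^ (1 - γ) := Real.rpow_nonneg (by linarith) _
      linarith
    refine h2.trans (le_of_eq ?_)
    have : γ - 1 ≠ 0 := sub_ne_zero.mpr hγ1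
    field_simp
end

section
/- There is an absolute constant $C$ such that for all $y \ge 9$, $\sum_{\sqrt{y} < p \le y/3} \frac{1}{p \log(y/p)} \le C \frac{\log\log y}{\log y}$, where the sum is over primes $p$. -/
open Finset
open scoped Classical

/-- `∑_{√y < p ≤ y/3} 1/(p log(y/p)) ≤ C loglog y / log y` for `y ≥ 9`. -/
theorem stmt_5 :
    ∃ C : ℝ, ∀ y : ℝ, 9 ≤ y →
      ∑ p ∈ (Finset.range (Nat.floor y + 1)).filter
          (fun p : ℕ => p.Prime ∧ Real.sqrt y < (p : ℝ) ∧ (p : ℝ) ≤ y / 3),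
        1 / ((p : ℝ) * Real.log (y / p)) ≤ C * Real.log (Real.log y) / Real.log y := by
  refine ⟨20, fun y hy => ?_⟩
  have hy0 : (0:ℝ) < y := by linarith
  set L := Real.log y with hLdef
  have hlog2 : (0.6931471803 : ℝ) < Real.log 2 := Real.log_two_gt_d9
  have hlog2' : Real.log 2 < 0.6931471808 := Real.log_two_lt_d9
  have hL2 : 2 ≤ L := by
    rw [hLdef, Real.le_log_iff_exp_le hy0]
    have h1 : Real.exp 1 < 2.7182818286 := Real.exp_one_lt_d9
    have h2 : Real.exp 2 = Real.exp 1 * Real.exp 1 := by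
      rw [← Real.exp_add]; norm_num
    have h3 : 0 < Real.exp 1 := Real.exp_pos 1
    nlinarith
  have hL0 : 0 < L := by linarith
  have hsy3 : 3 ≤ Real.sqrt y := by
    have h9 : Real.sqrt 9 = 3 := by
      rw [show (9:ℝ) = 3^2 by norm_num, Real.sqrt_sq (by norm_num)]
    calc (3:ℝ) = Real.sqrt 9 := h9.symm
      _ ≤ Real.sqrt y := Real.sqrt_le_sqrt hy
  have hsy0 : 0 < Real.sqrt y := by linarith
  have hlogsqrt : Real.log (Real.sqrt y) = L / 2 := Real.log_sqrt hy0.le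
  set P := (Finset.range (Nat.floor y + 1)).filter
      (fun p : ℕ => p.Prime ∧ Real.sqrt y < (p : ℝ) ∧ (p : ℝ) ≤ y / 3) with hPdef
  set Jf : ℕ → ℕ := fun p => Nat.log 2 (Nat.floor (y / p)) with hJfdef
  set Jmax : ℕ := Nat.log 2 (Nat.floor (Real.sqrt y)) with hJmaxdef
  -- basic facts about members of P
  have hPfacts : ∀ p ∈ P, p.Prime ∧ Real.sqrt y < (p : ℝ) ∧ (p : ℝ) ≤ y / 3 := by
    intro p hp
    exact (Finset.mem_filter.mp hp).2
  have hmaps : ∀ p ∈ P, Jf p ∈ Finset.Icc 1 Jmax := by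
    intro p hp
    obtain ⟨hprime, hsp, hp3⟩ := hPfacts p hp
    have hp0 : (0:ℝ) < p := lt_trans hsy0 hsp
    have hyp3 : (3:ℝ) ≤ y / p := by
      rw [le_div_iff₀ hp0]; linarith
    have hn3 : 3 ≤ Nat.floor (y / p) := by
      exact Nat.le_floor (by exact_mod_cast hyp3)
    have hj1 : 1 ≤ Jf p := Nat.log_pos (by norm_num) (by omega)
    have hyplt : y / p < Real.sqrt y := by
      have h1 : y / p < y / Real.sqrt y := by
        apply div_lt_div_of_pos_left hy0 hsy0 hsp
      rwa [Real.div_sqrt] at h1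
    have hjle : Jf p ≤ Jmax := by
      apply Nat.log_mono_right
      exact Nat.floor_le_floor hyplt.le
    exact Finset.mem_Icc.mpr ⟨hj1, hjle⟩
  rw [← Finset.sum_fiberwise_of_maps_to hmaps (fun p => 1 / ((p : ℝ) * Real.log (y / p)))]
  -- inner sum bound
  have hinner : ∀ j ∈ Finset.Icc 1 Jmax,
      ∑ p ∈ P.filter (fun p => Jf p = j), 1 / ((p : ℝ) * Real.log (y / p))
        ≤ 8 / (L * j) := by
    intro j hj
    have hj1 : 1 ≤ j := (Finset.mem_Icc.mp hj).1
    have hjR : (1:ℝ) ≤ (j:ℝ) := by exact_mod_cast hj1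
    set Q := P.filter (fun p => Jf p = j) with hQdef
    have ht : (0:ℝ) < (2:ℝ)^j := by positivity
    -- facts for p in Q
    have hQfacts : ∀ p ∈ Q, Real.sqrt y < (p:ℝ) ∧ (p:ℝ) ≤ y / 2^j ∧
        y / 2^(j+1) < (p:ℝ) ∧ (j:ℝ) * Real.log 2 ≤ Real.log (y / p) := by
      intro p hpQ
      obtain ⟨hpP, hpj⟩ := Finset.mem_filter.mp hpQ
      obtain ⟨hprime, hsp, hp3⟩ := hPfacts p hpP
      have hp0 : (0:ℝ) < p := lt_trans hsy0 hsp
      have hyp0 : (0:ℝ) ≤ y / p := by positivity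
      have hyp3 : (3:ℝ) ≤ y / p := by rw [le_div_iff₀ hp0]; linarith
      have hn0 : Nat.floor (y / p) ≠ 0 := by
        have : 3 ≤ Nat.floor (y / p) := Nat.le_floor (by exact_mod_cast hyp3)
        omega
      have h2j : (2:ℝ)^j ≤ y / p := by
        rw [← hpj]
        calc ((2:ℝ))^(Jf p) = ((2^(Jf p) : ℕ) : ℝ) := by push_cast; ring
          _ ≤ ((Nat.floor (y / p) : ℕ) : ℝ) := by
              exact_mod_cast Nat.pow_log_le_self 2 hn0
          _ ≤ y / p := Nat.floor_le hyp0
      have hlt : y / p < (2:ℝ)^(j+1) := by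
        rw [← hpj]
        have h1 : Nat.floor (y / p) < 2 ^ (Nat.log 2 (Nat.floor (y / p)) + 1) :=
          Nat.lt_pow_succ_log_self (by norm_num) _
        calc y / p < Nat.floor (y / p) + 1 := Nat.lt_floor_add_one _
          _ ≤ (2:ℝ)^(Jf p + 1) := by exact_mod_cast Nat.succ_le_of_lt h1
      refine ⟨hsp, ?_, ?_, ?_⟩
      · rw [le_div_iff₀ ht]
        calc (p:ℝ) * 2^j ≤ p * (y / p) := by
              apply mul_le_mul_of_nonneg_left h2j hp0.le
          _ = y := by field_simp
      · rw [div_lt_iff₀ (by positivity : (0:ℝ) < (2:ℝ)^(j+1))]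
        calc y = (y / p) * p := by field_simp
          _ < 2^(j+1) * p := by apply mul_lt_mul_of_pos_right hlt hp0
          _ = p * 2^(j+1) := by ring
      · calc (j:ℝ) * Real.log 2 = Real.log ((2:ℝ)^j) := by
              rw [Real.log_pow]
          _ ≤ Real.log (y / p) := Real.log_le_log ht h2j
    -- cardinality bound via primorial
    set M := Nat.floor (y / 2^j) with hMdef
    have hMy : (M:ℝ) ≤ y / 2^j := Nat.floor_le (by positivity)
    have hsub : Q ⊆ (Finset.range (M + 1)).filter Nat.Prime := by
      intro p hpQ
      obtain ⟨_, hpM, _, _⟩ := hQfacts p hpQ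
      have hprime := ((hPfacts p (Finset.mem_filter.mp hpQ).1)).1
      refine Finset.mem_filter.mpr ⟨?_, hprime⟩
      rw [Finset.mem_range]
      have : p ≤ M := Nat.le_floor (by exact_mod_cast hpM)
      omega
    have hprod : Real.sqrt y ^ Q.card ≤ (4:ℝ) ^ M := by
      calc Real.sqrt y ^ Q.card ≤ ∏ p ∈ Q, (p:ℝ) := by
            rw [← Finset.prod_const]
            exact Finset.prod_le_prod (fun i _ => hsy0.le) (fun p hpQ => (hQfacts p hpQ).1.le)
        _ = ((∏ p ∈ Q, p : ℕ) : ℝ) := by push_cast; ring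
        _ ≤ ((primorial M : ℕ) : ℝ) := by
            have h1 : ∏ p ∈ Q, p ≤ primorial M := by
              rw [primorial]
              apply Finset.prod_le_prod_of_subset_of_one_le' hsub
              intro i hi _
              exact (Finset.mem_filter.mp hi).2.one_lt.le
            exact_mod_cast h1
        _ ≤ (((4:ℕ) ^ M : ℕ) : ℝ) := by exact_mod_cast primorial_le_4_pow M
        _ = (4:ℝ) ^ M := by push_cast; ring
    have hcard : (Q.card : ℝ) ≤ 4 * Real.log 2 * y / (2^j * L) := by
      have hlog4 : Real.log 4 = 2 * Real.log 2 := by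
        rw [show (4:ℝ) = 2^2 by norm_num, Real.log_pow]; push_cast; ring
      have h1 : (Q.card : ℝ) * (L / 2) ≤ (M:ℝ) * Real.log 4 := by
        calc (Q.card : ℝ) * (L / 2) = Real.log (Real.sqrt y ^ Q.card) := by
              rw [Real.log_pow, hlogsqrt]
          _ ≤ Real.log ((4:ℝ) ^ M) := Real.log_le_log (by positivity) hprod
          _ = (M:ℝ) * Real.log 4 := by rw [Real.log_pow]
      have h2 : (M:ℝ) * Real.log 4 ≤ (y / 2^j) * (2 * Real.log 2) := by
        rw [hlog4]
        apply mul_le_mul_of_nonneg_right hMy (by positivity)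
      rw [le_div_iff₀ (by positivity)]
      have h3 : (y / 2^j) * (2^j : ℝ) = y := by field_simp
      nlinarith [mul_le_mul_of_nonneg_right (h1.trans h2) ht.le]
    -- sum over Q
    have hterm : ∀ p ∈ Q, 1 / ((p : ℝ) * Real.log (y / p))
        ≤ (y / 2^(j+1) * ((j:ℝ) * Real.log 2))⁻¹ := by
      intro p hpQ
      obtain ⟨hsp, _, hplow, hlog⟩ := hQfacts p hpQ
      have hp0 : (0:ℝ) < p := lt_trans hsy0 hsp
      have ha : (0:ℝ) < y / 2^(j+1) * ((j:ℝ) * Real.log 2) := by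
        apply mul_pos (by positivity)
        apply mul_pos (by linarith) (by linarith)
      rw [one_div]
      apply inv_anti₀ ha
      apply mul_le_mul hplow.le hlog (by positivity) hp0.le
    calc ∑ p ∈ Q, 1 / ((p : ℝ) * Real.log (y / p))
        ≤ Q.card • (y / 2^(j+1) * ((j:ℝ) * Real.log 2))⁻¹ :=
          Finset.sum_le_card_nsmul Q _ _ hterm
      _ = (Q.card : ℝ) * (y / 2^(j+1) * ((j:ℝ) * Real.log 2))⁻¹ := by
          rw [nsmul_eq_mul]
      _ ≤ (4 * Real.log 2 * y / (2^j * L)) * (y / 2^(j+1) * ((j:ℝ) * Real.log 2))⁻¹ := by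
          apply mul_le_mul_of_nonneg_right hcard
          positivity
      _ = 8 / (L * j) := by
          rw [pow_succ]
          field_simp
          ring
  -- combine
  have houter : ∑ j ∈ Finset.Icc 1 Jmax,
      (∑ p ∈ P.filter (fun p => Jf p = j), 1 / ((p : ℝ) * Real.log (y / p)))
      ≤ ∑ j ∈ Finset.Icc 1 Jmax, 8 / (L * j) :=
    Finset.sum_le_sum hinner
  have hharm : ∑ j ∈ Finset.Icc 1 Jmax, 8 / (L * (j:ℝ)) = (8 / L) * (harmonic Jmax : ℝ) := by
    have h1 : ((harmonic Jmax : ℚ) : ℝ) = ∑ j ∈ Finset.Icc 1 Jmax, ((j:ℝ))⁻¹ := by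
      rw [harmonic_eq_sum_Icc]; push_cast; ring
    rw [h1, Finset.mul_sum]
    apply Finset.sum_congr rfl
    intro j hj
    rw [div_mul_eq_mul_div, mul_comm L (j:ℝ)]
    field_simp
  have hJmaxL : (Jmax : ℝ) ≤ L := by
    have hfl0 : Nat.floor (Real.sqrt y) ≠ 0 := by
      have : 3 ≤ Nat.floor (Real.sqrt y) := Nat.le_floor (by exact_mod_cast hsy3)
      omega
    have h2J : (2:ℝ)^Jmax ≤ Real.sqrt y := by
      calc ((2:ℝ))^Jmax = ((2^Jmax : ℕ) : ℝ) := by push_cast; ring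
        _ ≤ ((Nat.floor (Real.sqrt y) : ℕ) : ℝ) := by
            exact_mod_cast Nat.pow_log_le_self 2 hfl0
        _ ≤ Real.sqrt y := Nat.floor_le hsy0.le
    have hlog : (Jmax:ℝ) * Real.log 2 ≤ L / 2 := by
      calc (Jmax:ℝ) * Real.log 2 = Real.log ((2:ℝ)^Jmax) := by
            rw [Real.log_pow]
        _ ≤ Real.log (Real.sqrt y) := Real.log_le_log (by positivity) h2J
        _ = L / 2 := hlogsqrt
    nlinarith [Nat.cast_nonneg (α := ℝ) Jmax]
  have hlogJ : Real.log Jmax ≤ Real.log L := by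
    rcases Nat.eq_zero_or_pos Jmax with h0 | h1
    · rw [h0]; simp
      exact (Real.log_pos (by linarith)).le
    · apply Real.log_le_log (by exact_mod_cast h1) hJmaxL
  have hfin : (8 / L) * (harmonic Jmax : ℝ) ≤ 20 * Real.log L / L := by
    have hh : (harmonic Jmax : ℝ) ≤ 1 + Real.log L :=
      (harmonic_le_one_add_log Jmax).trans (by linarith)
    have hlogL : (2:ℝ)/3 ≤ Real.log L := by
      have : Real.log 2 ≤ Real.log L := Real.log_le_log (by norm_num) hL2
      linarith
    have h8 : 8 * (harmonic Jmax : ℝ) ≤ 20 * Real.log L := by linarith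
    calc (8 / L) * (harmonic Jmax : ℝ) = 8 * (harmonic Jmax : ℝ) / L := by ring
      _ ≤ 20 * Real.log L / L := (div_le_div_iff_of_pos_right hL0).mpr h8
  calc _ ≤ ∑ j ∈ Finset.Icc 1 Jmax, 8 / (L * j) := houter
    _ = (8 / L) * (harmonic Jmax : ℝ) := hharm
    _ ≤ 20 * Real.log L / L := hfin
end

section
/- Let $\gamma > 0$ with $\gamma \notin \mathbb{N}$, let $q$ be a prime, and let $\alpha$ be a positive integer. Then for $y \ge 9$, $\sum_{\sqrt{y} < p \le y/3,\ \nu_q(p-1)=\alpha} \frac{1}{p (\log(y/p))^\gamma} = O_\gamma\left( \frac{1}{(\log y)^{\min\{\gamma,1\}}} \right)$, where the sum is over primes $p$. -/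
open Finset
open scoped Classical

lemma slope_rpow (s x : ℝ) (hx : 1 ≤ x) :
    ∃ c ∈ Set.Ioo x (x+1), (x+1)^s - x^s = s * c^(s-1) := by
  obtain ⟨c, hc, hceq⟩ := exists_hasDerivAt_eq_slope (fun t : ℝ => t ^ s)
    (fun t => s * t ^ (s-1)) (by linarith : x < x + 1)
    (ContinuousOn.rpow_const continuousOn_id (fun t ht =>
      Or.inl (ne_of_gt (lt_of_lt_of_le (by linarith) ht.1))))
    (fun t ht => Real.hasDerivAt_rpow_const
      (Or.inl (ne_of_gt (lt_of_lt_of_le (by linarith) ht.1.le))))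
  refine ⟨c, hc, ?_⟩
  have h1 : x + 1 - x = 1 := by ring
  rw [h1, div_one] at hceq
  exact hceq.symm

lemma step_rpow (γ x : ℝ) (hγ0 : 0 < γ) (hx : 1 ≤ x) :
    |1-γ| * x ^ (-γ) ≤ 2^γ * |(x+1)^(1-γ) - x^(1-γ)| := by
  obtain ⟨c, hc, heq⟩ := slope_rpow (1-γ) x hx
  have hc0 : (0:ℝ) < c := lt_of_le_of_lt (by linarith) hc.1
  have hcx : c ≤ 2*x := by nlinarith [hc.2]
  have hs : (1-γ) - 1 = -γ := by ring
  have key : (2*x) ^ (-γ) ≤ c ^ (-γ) :=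
    Real.rpow_le_rpow_of_nonpos hc0 hcx (by linarith)
  have h2x : (2*x) ^ (-γ) = 2^(-γ) * x^(-γ) :=
    Real.mul_rpow (by norm_num) (by linarith)
  have h21 : (2:ℝ)^γ * 2^(-γ) = 1 := by
    rw [← Real.rpow_add (by norm_num)]; simp
  calc |1-γ| * x ^ (-γ) = 2^γ * (|1-γ| * (2^(-γ) * x^(-γ))) := by
        rw [← mul_assoc, ← mul_assoc, mul_comm ((2:ℝ)^γ) |1-γ|, mul_assoc |1-γ|, h21, mul_one]
    _ ≤ 2^γ * (|1-γ| * c^(-γ)) := by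
        apply mul_le_mul_of_nonneg_left (mul_le_mul_of_nonneg_left ?_ (abs_nonneg _))
          (Real.rpow_nonneg (by norm_num) _)
        rw [← h2x]; exact key
    _ = 2^γ * |(x+1)^(1-γ) - x^(1-γ)| := by
        rw [heq, abs_mul, abs_of_pos (Real.rpow_pos_of_pos hc0 _), hs]

lemma tele_rpow (γ : ℝ) (hγ0 : 0 < γ) (hγ1 : γ ≠ 1) (J : ℕ) :
    ∑ j ∈ Icc 1 J, (j:ℝ) ^ (-γ) ≤
      2^γ / |1-γ| * (1 + |((J:ℝ)+1)^(1-γ) - 1|) := by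
  have habs : (0:ℝ) < |1-γ| := abs_pos.mpr (by intro h; apply hγ1; linarith)
  induction J with
  | zero =>
      simp only [Nat.cast_zero, zero_add, Real.one_rpow, sub_self, abs_zero, add_zero, mul_one,
        show Icc 1 0 = (∅ : Finset ℕ) by simp, sum_empty]
      exact div_nonneg (Real.rpow_nonneg (by norm_num) _) (abs_nonneg _)
  | succ J ih =>
      rw [Finset.sum_Icc_succ_top (by omega : 1 ≤ J+1)]
      have h1J : (1:ℝ) ≤ (J:ℝ) + 1 := by have : (0:ℝ) ≤ J := Nat.cast_nonneg J; linarith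
      have hstep := step_rpow γ ((J:ℝ)+1) hγ0 h1J
      -- the absolute-value difference telescopes
      have hsame : |((J:ℝ)+1+1)^(1-γ) - 1| - |((J:ℝ)+1)^(1-γ) - 1|
          = |((J:ℝ)+1+1)^(1-γ) - ((J:ℝ)+1)^(1-γ)| := by
        rcases le_or_gt γ 1 with h | h
        · have m1 : (1:ℝ) ≤ ((J:ℝ)+1)^(1-γ) := by
            calc (1:ℝ) = (1:ℝ)^(1-γ) := (Real.one_rpow _).symm
            _ ≤ _ := Real.rpow_le_rpow (by norm_num) h1J (by linarith)
          have m2 : ((J:ℝ)+1)^(1-γ) ≤ ((J:ℝ)+1+1)^(1-γ) :=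
            Real.rpow_le_rpow (by positivity) (by linarith) (by linarith)
          rw [abs_of_nonneg (by linarith), abs_of_nonneg (by linarith),
            abs_of_nonneg (by linarith)]
          ring
        · have m1 : ((J:ℝ)+1)^(1-γ) ≤ 1 := by
            calc _ ≤ (1:ℝ)^(1-γ) := Real.rpow_le_rpow_of_nonpos (by positivity) h1J (by linarith)
            _ = 1 := Real.one_rpow _
          have m2 : ((J:ℝ)+1+1)^(1-γ) ≤ ((J:ℝ)+1)^(1-γ) :=
            Real.rpow_le_rpow_of_nonpos (by positivity) (by linarith) (by linarith)
          rw [abs_of_nonpos (by linarith), abs_of_nonpos (by linarith),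
            abs_of_nonpos (by linarith)]
          ring
      have hJ1 : ((J:ℕ)+1 : ℕ) = ((J:ℝ)+1 : ℝ) := by push_cast; ring
      have hstep' : ((J:ℝ)+1) ^ (-γ) ≤
          2^γ / |1-γ| * (|((J:ℝ)+1+1)^(1-γ) - 1| - |((J:ℝ)+1)^(1-γ) - 1|) := by
        rw [hsame, div_mul_eq_mul_div, le_div_iff₀ habs, mul_comm]
        exact hstep
      have hrw : (((J+1 : ℕ)):ℝ) = (J:ℝ) + 1 := by push_cast; ring
      rw [hrw]
      have hrw2 : (((J+1 : ℕ)):ℝ) + 1 = (J:ℝ) + 1 + 1 := by push_cast; ring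
      calc ∑ j ∈ Icc 1 J, (j:ℝ) ^ (-γ) + ((J:ℝ)+1) ^ (-γ)
          ≤ 2^γ / |1-γ| * (1 + |((J:ℝ)+1)^(1-γ) - 1|)
            + 2^γ / |1-γ| * (|((J:ℝ)+1+1)^(1-γ) - 1| - |((J:ℝ)+1)^(1-γ) - 1|) :=
            add_le_add ih hstep'
        _ = 2^γ / |1-γ| * (1 + |((J:ℝ)+1+1)^(1-γ) - 1|) := by ring

/-- for `γ > 0`, `γ ∉ ℕ`, prime `q`, `α ≥ 1`, and `y ≥ 9`:
`∑_{√y < p ≤ y/3, ν_q(p-1)=α} 1/(p (log(y/p))^γ) = O_γ(1/(log y)^{min(γ,1)})`. -/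
theorem stmt_9 (γ : ℝ) (hγ : 0 < γ) (hγn : ∀ n : ℕ, γ ≠ n)
    (q : ℕ) (hq : q.Prime) (α : ℕ) (hα : 1 ≤ α) :
    ∃ C : ℝ, ∀ y : ℝ, 9 ≤ y →
      |∑ p ∈ (Finset.range (Nat.floor y + 1)).filter
          (fun p : ℕ => p.Prime ∧ Real.sqrt y < (p : ℝ) ∧ (p : ℝ) ≤ y / 3 ∧
            (p - 1).factorization q = α),
        1 / ((p : ℝ) * (Real.log (y / p)) ^ γ)| ≤ C / (Real.log y) ^ (min γ 1) := by
  classical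
  have hγ1 : γ ≠ 1 := by simpa using hγn 1
  have habs : (0:ℝ) < |1-γ| := abs_pos.mpr (by intro h; apply hγ1; linarith)
  set X : ℝ := Real.exp 1 * Real.log 4 * ((2:ℝ)^γ / |1-γ|) with hX
  have hXnn : 0 ≤ X := by
    apply mul_nonneg (mul_nonneg (Real.exp_pos 1).le ?_)
      (div_nonneg (Real.rpow_nonneg (by norm_num) _) (abs_nonneg _))
    exact Real.log_nonneg (by norm_num)
  refine ⟨4 * X, ?_⟩
  intro y hy
  have hy0 : (0:ℝ) < y := by linarith
  set L := Real.log y with hLdef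
  have hL2 : (2:ℝ) ≤ L := by
    rw [hLdef, Real.le_log_iff_exp_le hy0]
    have h2 : Real.exp 2 = Real.exp 1 * Real.exp 1 := by rw [← Real.exp_add]; norm_num
    nlinarith [Real.exp_one_lt_d9, Real.exp_pos 1]
  have hL0 : (0:ℝ) < L := by linarith
  set S := (Finset.range (Nat.floor y + 1)).filter
      (fun p : ℕ => p.Prime ∧ Real.sqrt y < (p : ℝ) ∧ (p : ℝ) ≤ y / 3 ∧
        (p - 1).factorization q = α) with hSdef
  set jf : ℕ → ℕ := fun p => ⌊Real.log (y / p)⌋₊ with hjf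
  -- basic facts about elements of S
  have hfacts : ∀ p ∈ S, (0:ℝ) < p ∧ (1:ℝ) ≤ Real.log (y/p) ∧
      Real.log (y/p) ≤ L/2 ∧ L/2 < Real.log p := by
    intro p hp
    rw [hSdef, mem_filter] at hp
    obtain ⟨-, hprime, hsq, hp3, -⟩ := hp
    have hp0 : (0:ℝ) < p := by
      have := hprime.two_le
      exact_mod_cast Nat.lt_of_lt_of_le (by norm_num) this
    have hyp3 : (3:ℝ) ≤ y / p := by
      rw [le_div_iff₀ hp0]; rw [le_div_iff₀ (by norm_num : (0:ℝ) < 3)] at hp3; linarith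
    have h1log : (1:ℝ) ≤ Real.log (y/p) := by
      have h3 : (1:ℝ) ≤ Real.log 3 := by
        rw [Real.le_log_iff_exp_le (by norm_num)]
        nlinarith [Real.exp_one_lt_d9]
      calc (1:ℝ) ≤ Real.log 3 := h3
        _ ≤ Real.log (y/p) := Real.log_le_log (by norm_num) hyp3
    have hsqpos : (0:ℝ) < Real.sqrt y := Real.sqrt_pos.mpr hy0
    have hlogp : L/2 < Real.log p := by
      have := Real.log_lt_log hsqpos hsq
      rwa [Real.log_sqrt hy0.le, ← hLdef] at this
    have hXle : Real.log (y/p) ≤ L/2 := by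
      rw [Real.log_div (ne_of_gt hy0) (ne_of_gt hp0), ← hLdef]
      linarith
    exact ⟨hp0, h1log, hXle, hlogp⟩
  -- nonnegativity of terms
  have hterm_nn : ∀ p ∈ S, (0:ℝ) ≤ 1 / ((p : ℝ) * (Real.log (y / p)) ^ γ) := by
    intro p hp
    obtain ⟨hp0, h1log, -, -⟩ := hfacts p hp
    positivity
  rw [abs_of_nonneg (Finset.sum_nonneg hterm_nn)]
  set J := ⌊L/2⌋₊ with hJ
  -- step A : pointwise bound
  have hg_mem : ∀ p ∈ S, 1 ≤ jf p ∧ jf p ≤ J := by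
    intro p hp
    obtain ⟨hp0, h1log, hXle, -⟩ := hfacts p hp
    constructor
    · exact Nat.le_floor (by exact_mod_cast h1log)
    · exact Nat.floor_le_floor hXle
  have stepA : ∑ p ∈ S, 1 / ((p : ℝ) * (Real.log (y / p)) ^ γ) ≤
      2/L * ∑ p ∈ S, Real.log p / (p * ((jf p : ℝ))^γ) := by
    rw [Finset.mul_sum]
    apply Finset.sum_le_sum
    intro p hp
    obtain ⟨hp0, h1log, hXle, hlogp⟩ := hfacts p hp
    have hj1 : (1:ℝ) ≤ (jf p : ℝ) := by exact_mod_cast (hg_mem p hp).1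
    have hjle : ((jf p : ℝ)) ≤ Real.log (y/p) := Nat.floor_le (by linarith)
    have hpow : ((jf p:ℝ))^γ ≤ (Real.log (y/p))^γ :=
      Real.rpow_le_rpow (by linarith) hjle hγ.le
    have hpowpos : (0:ℝ) < ((jf p:ℝ))^γ := Real.rpow_pos_of_pos (by linarith) _
    have h1 : 1 / ((p : ℝ) * (Real.log (y / p)) ^ γ) ≤ 1 / ((p:ℝ) * ((jf p:ℝ))^γ) := by
      apply one_div_le_one_div_of_le (by positivity)
      exact mul_le_mul_of_nonneg_left hpow hp0.le
    have h2 : (1:ℝ) ≤ 2/L * Real.log p := by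
      rw [div_mul_eq_mul_div, le_div_iff₀ hL0]; linarith
    calc 1 / ((p : ℝ) * (Real.log (y / p)) ^ γ)
        ≤ 1 / ((p:ℝ) * ((jf p:ℝ))^γ) := h1
      _ ≤ (2/L * Real.log p) * (1 / ((p:ℝ) * ((jf p:ℝ))^γ)) :=
          le_mul_of_one_le_left (by positivity) h2
      _ = 2/L * (Real.log p / (p * ((jf p : ℝ))^γ)) := by ring
  -- step B : fiberwise
  have stepB : ∑ p ∈ S, Real.log p / (p * ((jf p : ℝ))^γ) =
      ∑ j ∈ Icc 1 J, ∑ p ∈ S.filter (fun p => jf p = j),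
        Real.log p / (p * ((jf p : ℝ))^γ) := by
    rw [Finset.sum_fiberwise_of_maps_to (fun p hp => Finset.mem_Icc.mpr (hg_mem p hp))]
  -- step C : fiber bound
  have stepC : ∀ j ∈ Icc 1 J, ∑ p ∈ S.filter (fun p => jf p = j),
      Real.log p / (p * ((jf p : ℝ))^γ) ≤ Real.exp 1 * Real.log 4 * (j:ℝ)^(-γ) := by
    intro j hj
    have hj1 : 1 ≤ j := (Finset.mem_Icc.mp hj).1
    have hj1R : (1:ℝ) ≤ (j:ℝ) := by exact_mod_cast hj1
    set n := ⌊y / Real.exp j⌋₊ with hn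
    set F := S.filter (fun p => jf p = j) with hF
    have hFmem : ∀ p ∈ F, (0:ℝ) < p ∧ 1 ≤ p ∧ p.Prime ∧ p ≤ n ∧
        ((p:ℝ))⁻¹ ≤ Real.exp ((j:ℝ)+1) / y := by
      intro p hp
      rw [hF, mem_filter] at hp
      obtain ⟨hpS, hpj⟩ := hp
      obtain ⟨hp0, h1log, -, -⟩ := hfacts p hpS
      have hprime : p.Prime := by
        rw [hSdef, mem_filter] at hpS; exact hpS.2.1
      have hp1 : 1 ≤ p := hprime.one_lt.le
      have hjle : (j:ℝ) ≤ Real.log (y/p) :=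
        (Nat.le_floor_iff (by linarith : (0:ℝ) ≤ Real.log (y/p))).mp (le_of_eq hpj.symm)
      have hjlt : Real.log (y/p) < (j:ℝ) + 1 := by
        have h2 := Nat.lt_floor_add_one (Real.log (y/(p:ℝ)))
        have h3 : ⌊Real.log (y/(p:ℝ))⌋₊ = j := hpj
        rw [h3] at h2
        exact h2
      have hyppos : (0:ℝ) < y / p := by positivity
      have hexpj : Real.exp j ≤ y / p := by
        calc Real.exp (j:ℝ) ≤ Real.exp (Real.log (y/p)) := Real.exp_le_exp.mpr hjle
          _ = y / p := Real.exp_log hyppos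
      have hpn : p ≤ n := by
        apply Nat.le_floor
        rw [le_div_iff₀ (Real.exp_pos _)]
        rw [le_div_iff₀ hp0] at hexpj
        linarith
      have hinv : ((p:ℝ))⁻¹ ≤ Real.exp ((j:ℝ)+1) / y := by
        have hyp : y / p < Real.exp ((j:ℝ)+1) := by
          calc y / p = Real.exp (Real.log (y/p)) := (Real.exp_log hyppos).symm
            _ < Real.exp ((j:ℝ)+1) := Real.exp_lt_exp.mpr hjlt
        rw [div_lt_iff₀ hp0] at hyp
        rw [inv_eq_one_div, div_le_div_iff₀ hp0 hy0]
        linarith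
      exact ⟨hp0, hp1, hprime, hpn, hinv⟩
    have hsumlog : ∑ p ∈ F, Real.log p ≤ (y / Real.exp j) * Real.log 4 := by
      have hne : ∀ p ∈ F, ((p:ℕ):ℝ) ≠ 0 := fun p hp => ne_of_gt (hFmem p hp).1
      have hlogprod : ∑ p ∈ F, Real.log p = Real.log (∏ p ∈ F, ((p:ℕ):ℝ)) :=
        (Real.log_prod hne).symm
      have hcast : (∏ p ∈ F, ((p:ℕ):ℝ)) = ((∏ p ∈ F, p : ℕ) : ℝ) := by push_cast; ring
      have hsub : F ⊆ (range (n+1)).filter Nat.Prime := by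
        intro p hp
        rw [mem_filter, mem_range]
        exact ⟨Nat.lt_succ_of_le (hFmem p hp).2.2.2.1, (hFmem p hp).2.2.1⟩
      have hprodle : (∏ p ∈ F, p) ≤ primorial n := by
        apply Finset.prod_le_prod_of_subset_of_one_le' hsub
        intro i hi _
        exact (Finset.mem_filter.mp hi).2.one_lt.le
      have h4 : primorial n ≤ 4^n := primorial_le_4_pow n
      have hprodpos : 0 < (∏ p ∈ F, p) := Finset.prod_pos (fun p hp => (hFmem p hp).2.2.1.pos)
      have hlogle : Real.log ((∏ p ∈ F, p : ℕ) : ℝ) ≤ Real.log (((4:ℕ)^n : ℕ) : ℝ) := by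
        apply Real.log_le_log (by exact_mod_cast hprodpos)
        exact_mod_cast le_trans hprodle h4
      have hlog4 : Real.log (((4:ℕ)^n : ℕ) : ℝ) = (n:ℝ) * Real.log 4 := by
        push_cast
        rw [Real.log_pow]
      have hnle : (n:ℝ) ≤ y / Real.exp j := Nat.floor_le (by positivity)
      calc ∑ p ∈ F, Real.log p = Real.log ((∏ p ∈ F, p : ℕ) : ℝ) := by rw [hlogprod, hcast]
        _ ≤ (n:ℝ) * Real.log 4 := by rw [← hlog4]; exact hlogle
        _ ≤ (y / Real.exp j) * Real.log 4 :=
            mul_le_mul_of_nonneg_right hnle (Real.log_nonneg (by norm_num))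
    calc ∑ p ∈ F, Real.log p / (p * ((jf p : ℝ))^γ)
        ≤ ∑ p ∈ F, (Real.exp ((j:ℝ)+1) / y) * (j:ℝ)^(-γ) * Real.log p := by
          apply Finset.sum_le_sum
          intro p hp
          obtain ⟨hp0, hp1, hprime, hpn, hinv⟩ := hFmem p hp
          have hpj : jf p = j := (mem_filter.mp hp).2
          have hlogpnn : 0 ≤ Real.log p := Real.log_nonneg (by exact_mod_cast hp1)
          rw [hpj]
          have hjpos : (0:ℝ) < (j:ℝ) := by linarith
          rw [Real.rpow_neg hjpos.le]
          have hjp : (0:ℝ) < (j:ℝ)^γ := Real.rpow_pos_of_pos hjpos _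
          rw [div_eq_mul_inv, mul_inv]
          calc Real.log p * ((p:ℝ)⁻¹ * ((j:ℝ)^γ)⁻¹)
              ≤ Real.log p * ((Real.exp ((j:ℝ)+1) / y) * ((j:ℝ)^γ)⁻¹) := by
                apply mul_le_mul_of_nonneg_left _ hlogpnn
                exact mul_le_mul_of_nonneg_right hinv (by positivity)
            _ = Real.exp ((j:ℝ)+1) / y * ((j:ℝ)^γ)⁻¹ * Real.log p := by ring
      _ = (Real.exp ((j:ℝ)+1) / y) * (j:ℝ)^(-γ) * ∑ p ∈ F, Real.log p := by
          rw [← Finset.mul_sum]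
      _ ≤ (Real.exp ((j:ℝ)+1) / y) * (j:ℝ)^(-γ) * ((y / Real.exp j) * Real.log 4) := by
          apply mul_le_mul_of_nonneg_left hsumlog
          positivity
      _ = Real.exp 1 * Real.log 4 * (j:ℝ)^(-γ) := by
          rw [Real.exp_add]
          field_simp
  -- assemble
  have hsum2 : ∑ p ∈ S, 1 / ((p : ℝ) * (Real.log (y / p)) ^ γ) ≤
      2/L * (Real.exp 1 * Real.log 4 * ∑ j ∈ Icc 1 J, (j:ℝ)^(-γ)) := by
    calc ∑ p ∈ S, 1 / ((p : ℝ) * (Real.log (y / p)) ^ γ)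
        ≤ 2/L * ∑ p ∈ S, Real.log p / (p * ((jf p : ℝ))^γ) := stepA
      _ = 2/L * ∑ j ∈ Icc 1 J, ∑ p ∈ S.filter (fun p => jf p = j),
            Real.log p / (p * ((jf p : ℝ))^γ) := by rw [stepB]
      _ ≤ 2/L * ∑ j ∈ Icc 1 J, Real.exp 1 * Real.log 4 * (j:ℝ)^(-γ) := by
          apply mul_le_mul_of_nonneg_left (Finset.sum_le_sum stepC) (by positivity)
      _ = 2/L * (Real.exp 1 * Real.log 4 * ∑ j ∈ Icc 1 J, (j:ℝ)^(-γ)) := by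
          simp only [Finset.mul_sum]
  have htele := tele_rpow γ hγ hγ1 J
  rcases lt_trichotomy γ 1 with hlt | heq | hgt
  · -- γ < 1 : min γ 1 = γ
    rw [min_eq_left hlt.le]
    have hs : 0 < 1 - γ := by linarith
    have hJ1 : ((J:ℝ)+1) ≤ L := by
      have : (J:ℝ) ≤ L/2 := Nat.floor_le (by linarith)
      linarith
    have h1le : (1:ℝ) ≤ ((J:ℝ)+1)^(1-γ) := by
      calc (1:ℝ) = (1:ℝ)^(1-γ) := (Real.one_rpow _).symm
      _ ≤ _ := Real.rpow_le_rpow (by norm_num)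
          (by have : (0:ℝ) ≤ J := Nat.cast_nonneg J; linarith) hs.le
    have htele2 : ∑ j ∈ Icc 1 J, (j:ℝ)^(-γ) ≤ 2^γ/|1-γ| * L^(1-γ) := by
      calc ∑ j ∈ Icc 1 J, (j:ℝ)^(-γ)
          ≤ 2^γ/|1-γ| * (1 + |((J:ℝ)+1)^(1-γ) - 1|) := htele
        _ = 2^γ/|1-γ| * ((J:ℝ)+1)^(1-γ) := by
            rw [abs_of_nonneg (show (0:ℝ) ≤ ((J:ℝ)+1)^(1-γ) - 1 by linarith)]; ring
        _ ≤ 2^γ/|1-γ| * L^(1-γ) := by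
            apply mul_le_mul_of_nonneg_left (Real.rpow_le_rpow (by positivity) hJ1 hs.le)
            positivity
    calc ∑ p ∈ S, 1 / ((p : ℝ) * (Real.log (y / p)) ^ γ)
        ≤ 2/L * (Real.exp 1 * Real.log 4 * (2^γ/|1-γ| * L^(1-γ))) := by
          apply hsum2.trans
          apply mul_le_mul_of_nonneg_left _ (by positivity)
          apply mul_le_mul_of_nonneg_left htele2 (by positivity)
      _ = 2 * X * (L^(1-γ) / L) := by rw [hX]; ring
      _ = 2 * X / L^γ := by
          rw [show (1-γ) = -γ + 1 by ring, Real.rpow_add hL0, Real.rpow_one,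
            Real.rpow_neg hL0.le]
          field_simp
      _ ≤ 4 * X / L^γ := by
          have h := Real.rpow_pos_of_pos hL0 γ
          rw [div_le_div_iff₀ h h]
          nlinarith
  · exact absurd heq hγ1
  · -- γ > 1 : min γ 1 = 1
    rw [min_eq_right hgt.le]
    have hs : 1 - γ < 0 := by linarith
    have h1le : ((J:ℝ)+1)^(1-γ) ≤ 1 := by
      calc ((J:ℝ)+1)^(1-γ) ≤ (1:ℝ)^(1-γ) :=
            Real.rpow_le_rpow_of_nonpos (by norm_num)
            (by have : (0:ℝ) ≤ J := Nat.cast_nonneg J; linarith) hs.le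
      _ = 1 := Real.one_rpow _
    have hnn : 0 ≤ ((J:ℝ)+1)^(1-γ) := Real.rpow_nonneg (by positivity) _
    have htele2 : ∑ j ∈ Icc 1 J, (j:ℝ)^(-γ) ≤ 2^γ/|1-γ| * 2 := by
      calc ∑ j ∈ Icc 1 J, (j:ℝ)^(-γ)
          ≤ 2^γ/|1-γ| * (1 + |((J:ℝ)+1)^(1-γ) - 1|) := htele
        _ ≤ 2^γ/|1-γ| * 2 := by
            apply mul_le_mul_of_nonneg_left _ (by positivity)
            rw [abs_of_nonpos (by linarith)]
            linarith
    calc ∑ p ∈ S, 1 / ((p : ℝ) * (Real.log (y / p)) ^ γ)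
        ≤ 2/L * (Real.exp 1 * Real.log 4 * (2^γ/|1-γ| * 2)) := by
          apply hsum2.trans
          apply mul_le_mul_of_nonneg_left _ (by positivity)
          apply mul_le_mul_of_nonneg_left htele2 (by positivity)
      _ = 4 * X / L := by rw [hX]; ring
      _ = 4 * X / L^(1:ℝ) := by rw [Real.rpow_one]
end
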